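/- Let {χ_γ}_{γ∈ℤᵈ} be indicators of sets with finite overlap constant N, let A be a bounded positivity-preserving operator on L²(ℝᵈ), and let {T_γ} be bounded operators with sup_γ ‖T_γ‖ =: M < ∞. Then the positively homogeneous map ψ ↦ ∑_γ χ_γ · A(|T_γ(χ_γ ψ)|), defined on compactly supported functions, extends by continuity to a bounded map on L²(ℝᵈ) satisfying ‖Γ̂_A(T)ψ‖ ≤ C·N·‖A‖·M·‖ψ‖ for a universal constant C, and moreover |Γ̂_A(T)(ψ₁) - Γ̂_A(T)(ψ₂)| ≤ Γ̂_A(T)(ψ₁-ψ₂) pointwise. -/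

import Mathlib

open MeasureTheory Filter ENNReal

noncomputable section

abbrev Ed (d : ℕ) := EuclideanSpace ℝ (Fin d)
abbrev L2r (d : ℕ) := Lp ℝ 2 (volume : Measure (Ed d))

namespace GluedAux

variable {d : ℕ} (s : (Fin d → ℤ) → Set (Ed d)) (hs : ∀ γ, MeasurableSet (s γ))
  (A : L2r d →L[ℝ] L2r d) (T : (Fin d → ℤ) → (L2r d →L[ℝ] L2r d))

/-- The Lp element χ_γ ψ. -/
def chi (ψ : L2r d) (γ : Fin d → ℤ) : L2r d :=
  MemLp.toLp ((s γ).indicator ψ) (MemLp.indicator (hs γ) (Lp.memLp ψ))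

/-- The Lp element A |T γ (χ_γ ψ)|. -/
def g (ψ : L2r d) (γ : Fin d → ℤ) : L2r d := A |T γ (chi s hs ψ γ)|

/-- The ENNReal-valued candidate sum. -/
def h (ψ : L2r d) (x : Ed d) : ℝ≥0∞ :=
  ∑' γ, (s γ).indicator (fun _ => (1:ℝ≥0∞)) x * ENNReal.ofReal ((g s hs A T ψ γ : Ed d → ℝ) x)

def rep (ψ : L2r d) (x : Ed d) : ℝ := (h s hs A T ψ x).toReal

lemma g_nonneg (ψ : L2r d) (γ : Fin d → ℤ) (hA : ∀ ψ : L2r d, 0 ≤ ψ → 0 ≤ A ψ) :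
    0 ≤ g s hs A T ψ γ := hA _ (abs_nonneg _)

lemma chi_sub (ψ₁ ψ₂ : L2r d) (γ : Fin d → ℤ) :
    chi s hs (ψ₁ - ψ₂) γ = chi s hs ψ₁ γ - chi s hs ψ₂ γ := by
  rw [chi, chi, chi, ← MemLp.toLp_sub]
  apply MemLp.toLp_congr
  filter_upwards [Lp.coeFn_sub ψ₁ ψ₂] with x hx
  by_cases hxs : x ∈ s γ
  · simp only [Set.indicator_of_mem hxs, Pi.sub_apply, hx]
  · simp only [Set.indicator_of_notMem hxs, Pi.sub_apply, sub_zero, sub_self]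

lemma measurable_h (ψ : L2r d) : Measurable (h s hs A T ψ) := by
  apply Measurable.ennreal_tsum
  intro γ
  exact ((measurable_const.indicator (hs γ))).mul
    (ENNReal.measurable_ofReal.comp (Lp.stronglyMeasurable _).measurable)

lemma measurable_rep (ψ : L2r d) : Measurable (rep s hs A T ψ) :=
  (measurable_h s hs A T ψ).ennreal_toReal


lemma A_mono (hA : ∀ ψ : L2r d, 0 ≤ ψ → 0 ≤ A ψ) {f g : L2r d} (hfg : f ≤ g) :
    A f ≤ A g := by
  have h0 := hA (g - f) (by rwa [sub_nonneg])
  rw [map_sub] at h0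
  exact sub_nonneg.1 h0

lemma abs_sub_abs_le (u v : L2r d) : |u| - |v| ≤ |u - v| := by
  rw [← Lp.coeFn_le]
  filter_upwards [Lp.coeFn_sub |u| |v|, Lp.coeFn_abs u, Lp.coeFn_abs v,
    Lp.coeFn_abs (u - v), Lp.coeFn_sub u v] with x h1 h2 h3 h4 h5
  rw [h1, h4, Pi.sub_apply, h2, h3, h5, Pi.sub_apply]
  exact abs_sub_abs_le_abs_sub _ _

lemma g_sub_le (s : (Fin d → ℤ) → Set (Ed d)) (hs : ∀ γ, MeasurableSet (s γ)) (A : L2r d →L[ℝ] L2r d) (T : (Fin d → ℤ) → (L2r d →L[ℝ] L2r d)) (hA : ∀ ψ : L2r d, 0 ≤ ψ → 0 ≤ A ψ) (ψ₁ ψ₂ : L2r d) (γ : Fin d → ℤ) :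
    g s hs A T ψ₁ γ - g s hs A T ψ₂ γ ≤ g s hs A T (ψ₁ - ψ₂) γ := by
  have key : T γ (chi s hs (ψ₁ - ψ₂) γ) = T γ (chi s hs ψ₁ γ) - T γ (chi s hs ψ₂ γ) := by
    rw [chi_sub, map_sub]
  unfold g
  rw [key, ← map_sub]
  exact A_mono A hA (abs_sub_abs_le _ _)

lemma ae_abs_g_sub_le (hA : ∀ ψ : L2r d, 0 ≤ ψ → 0 ≤ A ψ) (ψ₁ ψ₂ : L2r d) :
    ∀ᵐ x : Ed d, ∀ γ, |(g s hs A T ψ₁ γ : Ed d → ℝ) x - (g s hs A T ψ₂ γ : Ed d → ℝ) x|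
      ≤ (g s hs A T (ψ₁ - ψ₂) γ : Ed d → ℝ) x := by
  rw [MeasureTheory.ae_all_iff]
  intro γ
  have h1 := g_sub_le s hs A T hA ψ₁ ψ₂ γ
  have h2 := g_sub_le s hs A T hA ψ₂ ψ₁ γ
  rw [← Lp.coeFn_le] at h1 h2
  have e12 : (ψ₂ - ψ₁ : L2r d) = -(ψ₁ - ψ₂) := (neg_sub _ _).symm
  filter_upwards [h1, h2, Lp.coeFn_sub (g s hs A T ψ₁ γ) (g s hs A T ψ₂ γ),
    Lp.coeFn_sub (g s hs A T ψ₂ γ) (g s hs A T ψ₁ γ)] with x ha hb hc hd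
  rw [hc, Pi.sub_apply] at ha
  rw [hd, Pi.sub_apply, e12] at hb
  have : (g s hs A T (-(ψ₁ - ψ₂)) γ) = g s hs A T (ψ₁ - ψ₂) γ := by
    unfold g chi
    congr 1
    have : MemLp.toLp ((s γ).indicator (↑↑(-(ψ₁ - ψ₂)) : Ed d → ℝ)) (MemLp.indicator (hs γ) (Lp.memLp _))
        = - MemLp.toLp ((s γ).indicator (↑↑(ψ₁ - ψ₂) : Ed d → ℝ)) (MemLp.indicator (hs γ) (Lp.memLp _)) := by
      rw [← MemLp.toLp_neg]
      apply MemLp.toLp_congr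
      filter_upwards [Lp.coeFn_neg (ψ₁ - ψ₂)] with y hy
      by_cases hys : y ∈ s γ
      · simp only [Set.indicator_of_mem hys, hy, Pi.neg_apply]
      · simp only [Set.indicator_of_notMem hys, Pi.neg_apply, neg_zero]
    rw [this, map_neg, abs_neg]
  rw [this] at hb
  rw [abs_sub_le_iff]
  exact ⟨ha, hb⟩

lemma ae_g_nonneg (hA : ∀ ψ : L2r d, 0 ≤ ψ → 0 ≤ A ψ) (ψ : L2r d) :
    ∀ᵐ x : Ed d, ∀ γ, 0 ≤ (g s hs A T ψ γ : Ed d → ℝ) x := by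
  rw [MeasureTheory.ae_all_iff]
  intro γ
  exact (Lp.coeFn_nonneg _).2 (g_nonneg s hs A T ψ γ hA)

/-- Cauchy–Schwarz-flavoured bound with constant 2. -/
lemma tsum_sq_le {ι : Type*} (c v : ι → ℝ≥0∞) :
    (∑' i, c i * v i) ^ 2 ≤ 2 * (∑' i, c i) * ∑' i, c i * v i ^ 2 := by
  have amgm : ∀ a b : ℝ≥0∞, a * b ≤ a ^ 2 + b ^ 2 := by
    intro a b
    rcases le_total a b with h | h
    · calc a * b ≤ b * b := mul_le_mul_left h b
        _ ≤ _ := by rw [← pow_two]; exact le_add_self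
    · calc a * b ≤ a * a := mul_le_mul_right h a
        _ ≤ _ := by rw [← pow_two]; exact le_self_add
  calc (∑' i, c i * v i) ^ 2 = ∑' i, (c i * v i) * ∑' j, c j * v j := by
        rw [pow_two, ENNReal.tsum_mul_right]
    _ = ∑' i, ∑' j, (c i * v i) * (c j * v j) := by
        congr 1; funext i; rw [ENNReal.tsum_mul_left]
    _ ≤ ∑' i, ∑' j, c i * c j * (v i ^ 2 + v j ^ 2) := by
        refine ENNReal.tsum_le_tsum fun i => ENNReal.tsum_le_tsum fun j => ?_
        calc (c i * v i) * (c j * v j) = c i * c j * (v i * v j) := by ring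
          _ ≤ c i * c j * (v i ^ 2 + v j ^ 2) := mul_le_mul_right (amgm _ _) _
    _ = 2 * (∑' i, c i) * ∑' i, c i * v i ^ 2 := by
        have : ∀ i, ∑' j, c i * c j * (v i ^ 2 + v j ^ 2)
            = c i * v i ^ 2 * (∑' j, c j) + c i * (∑' j, c j * v j ^ 2) := by
          intro i
          rw [← ENNReal.tsum_mul_left, ← ENNReal.tsum_mul_left, ← ENNReal.tsum_add]
          congr 1; funext j; ring
        simp_rw [this]
        rw [ENNReal.tsum_add, ENNReal.tsum_mul_right, ENNReal.tsum_mul_right]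
        ring


lemma eLpNorm_two_sq (f : Ed d → ℝ) :
    (eLpNorm f 2 volume) ^ 2 = ∫⁻ x, (‖f x‖₊ : ℝ≥0∞) ^ 2 := by
  rw [eLpNorm_eq_lintegral_rpow_enorm_toReal two_ne_zero ENNReal.ofNat_ne_top]
  have h2 : ((2:ℝ≥0∞)).toReal = (2:ℝ) := by norm_num
  rw [h2, ← ENNReal.rpow_natCast _ 2, ← ENNReal.rpow_mul]
  norm_num
  rfl

/-- the overlap bound on the sum of indicator-squared-norms of ψ. -/
lemma tsum_chi_norm_sq (N : NNReal)
    (hN : ∀ x : Ed d, ∑' γ : Fin d → ℤ, (s γ).indicator (fun _ => (1 : ℝ≥0∞)) x ≤ N)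
    (ψ : L2r d) :
    ∑' γ : Fin d → ℤ, ENNReal.ofReal ‖chi s hs ψ γ‖ ^ 2
      ≤ N * ENNReal.ofReal ‖ψ‖ ^ 2 := by
  have hnorm : ∀ γ, ENNReal.ofReal ‖chi s hs ψ γ‖ = eLpNorm ((s γ).indicator (ψ : Ed d → ℝ)) 2 volume := by
    intro γ
    rw [Lp.norm_def, ENNReal.ofReal_toReal (Lp.eLpNorm_ne_top _)]
    exact eLpNorm_congr_ae (MemLp.coeFn_toLp _)
  have hψ : ENNReal.ofReal ‖ψ‖ = eLpNorm (ψ : Ed d → ℝ) 2 volume := by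
    rw [Lp.norm_def, ENNReal.ofReal_toReal (Lp.eLpNorm_ne_top _)]
  simp_rw [hnorm, hψ, eLpNorm_two_sq]
  have hpt : ∀ (γ : Fin d → ℤ) (x : Ed d),
      (‖(s γ).indicator (ψ : Ed d → ℝ) x‖₊ : ℝ≥0∞) ^ 2
        = (s γ).indicator (fun _ => (1:ℝ≥0∞)) x * (‖(ψ : Ed d → ℝ) x‖₊ : ℝ≥0∞) ^ 2 := by
    intro γ x
    by_cases hxs : x ∈ s γ
    · simp [Set.indicator_of_mem hxs]
    · simp [Set.indicator_of_notMem hxs]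
  simp_rw [hpt]
  rw [← lintegral_tsum]
  · calc ∫⁻ x, ∑' γ, (s γ).indicator (fun _ => (1:ℝ≥0∞)) x * (‖(ψ : Ed d → ℝ) x‖₊ : ℝ≥0∞) ^ 2
        ≤ ∫⁻ x, (N : ℝ≥0∞) * (‖(ψ : Ed d → ℝ) x‖₊ : ℝ≥0∞) ^ 2 := by
          refine lintegral_mono fun x => ?_
          rw [ENNReal.tsum_mul_right]
          exact mul_le_mul_left (hN x) _
      _ = N * ∫⁻ x, (‖(ψ : Ed d → ℝ) x‖₊ : ℝ≥0∞) ^ 2 :=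
          lintegral_const_mul _ ((Lp.stronglyMeasurable ψ).measurable.nnnorm.coe_nnreal_ennreal.pow measurable_const)
  · intro γ
    exact (((measurable_const.indicator (hs γ))).mul
      ((Lp.stronglyMeasurable ψ).measurable.nnnorm.coe_nnreal_ennreal.pow measurable_const)).aemeasurable

/-- norm bound on g. -/
lemma norm_g_le (M : ℝ) (hM : ∀ γ, ‖T γ‖ ≤ M) (ψ : L2r d) (γ : Fin d → ℤ) :
    ‖g s hs A T ψ γ‖ ≤ ‖A‖ * M * ‖chi s hs ψ γ‖ := by
  have h1 : ‖g s hs A T ψ γ‖ ≤ ‖A‖ * ‖|T γ (chi s hs ψ γ)|‖ := A.le_opNorm _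
  rw [norm_abs_eq_norm] at h1
  have h2 : ‖T γ (chi s hs ψ γ)‖ ≤ M * ‖chi s hs ψ γ‖ :=
    le_trans ((T γ).le_opNorm _) (mul_le_mul_of_nonneg_right (hM γ) (norm_nonneg _))
  calc ‖g s hs A T ψ γ‖ ≤ ‖A‖ * ‖T γ (chi s hs ψ γ)‖ := h1
    _ ≤ ‖A‖ * (M * ‖chi s hs ψ γ‖) := mul_le_mul_of_nonneg_left h2 (norm_nonneg _)
    _ = ‖A‖ * M * ‖chi s hs ψ γ‖ := by ring

/-- The main integral estimate. -/
lemma lintegral_h_sq_le (N : NNReal)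
    (hN : ∀ x : Ed d, ∑' γ : Fin d → ℤ, (s γ).indicator (fun _ => (1 : ℝ≥0∞)) x ≤ N)
    (M : ℝ) (hM : ∀ γ, ‖T γ‖ ≤ M) (ψ : L2r d) :
    ∫⁻ x, (h s hs A T ψ x) ^ 2
      ≤ 2 * N ^ 2 * ENNReal.ofReal (‖A‖ * M) ^ 2 * ENNReal.ofReal ‖ψ‖ ^ 2 := by
  have hM0 : 0 ≤ M := le_trans (norm_nonneg (T fun _ => 0)) (hM _)
  have hmeas : ∀ γ : Fin d → ℤ, Measurable fun x =>
      (s γ).indicator (fun _ => (1:ℝ≥0∞)) x * ENNReal.ofReal ((g s hs A T ψ γ : Ed d → ℝ) x) :=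
    fun γ => (measurable_const.indicator (hs γ)).mul
      (ENNReal.measurable_ofReal.comp (Lp.stronglyMeasurable _).measurable)
  calc ∫⁻ x, (h s hs A T ψ x) ^ 2
      ≤ ∫⁻ x, 2 * N * ∑' γ, (s γ).indicator (fun _ => (1:ℝ≥0∞)) x
          * ENNReal.ofReal ((g s hs A T ψ γ : Ed d → ℝ) x) ^ 2 := by
        refine lintegral_mono fun x => ?_
        refine le_trans (tsum_sq_le _ _) ?_
        exact mul_le_mul_left (mul_le_mul_right (hN x) 2) _
    _ = 2 * N * ∑' γ, ∫⁻ x, (s γ).indicator (fun _ => (1:ℝ≥0∞)) x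
          * ENNReal.ofReal ((g s hs A T ψ γ : Ed d → ℝ) x) ^ 2 := by
        rw [lintegral_const_mul]
        · rw [lintegral_tsum]
          intro γ
          exact ((measurable_const.indicator (hs γ)).mul
            ((ENNReal.measurable_ofReal.comp (Lp.stronglyMeasurable _).measurable).pow
              measurable_const)).aemeasurable
        · exact Measurable.ennreal_tsum fun γ =>
            (measurable_const.indicator (hs γ)).mul
              ((ENNReal.measurable_ofReal.comp (Lp.stronglyMeasurable _).measurable).pow
                measurable_const)
    _ ≤ 2 * N * ∑' γ : Fin d → ℤ, ENNReal.ofReal ‖A‖ ^ 2 * ENNReal.ofReal M ^ 2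
          * ENNReal.ofReal ‖chi s hs ψ γ‖ ^ 2 := by
        gcongr with γ
        calc ∫⁻ x, (s γ).indicator (fun _ => (1:ℝ≥0∞)) x
              * ENNReal.ofReal ((g s hs A T ψ γ : Ed d → ℝ) x) ^ 2
            ≤ ∫⁻ x, (‖(g s hs A T ψ γ : Ed d → ℝ) x‖₊ : ℝ≥0∞) ^ 2 := by
              refine lintegral_mono fun x => ?_
              have hle : (s γ).indicator (fun _ => (1:ℝ≥0∞)) x ≤ 1 := by
                by_cases hxs : x ∈ s γ <;>
                  simp [Set.indicator_of_mem, Set.indicator_of_notMem, hxs]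
              refine le_trans (mul_le_mul_left hle _) ?_
              rw [one_mul]
              exact pow_le_pow_left' (Real.ofReal_le_enorm _) 2
          _ = (eLpNorm ((g s hs A T ψ γ : Ed d → ℝ)) 2 volume) ^ 2 := (eLpNorm_two_sq _).symm
          _ = ENNReal.ofReal ‖g s hs A T ψ γ‖ ^ 2 := by
              rw [Lp.norm_def, ENNReal.ofReal_toReal (Lp.eLpNorm_ne_top _)]
          _ ≤ ENNReal.ofReal ‖A‖ ^ 2 * ENNReal.ofReal M ^ 2 * ENNReal.ofReal ‖chi s hs ψ γ‖ ^ 2 := by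
              rw [← mul_pow, ← mul_pow, ← ENNReal.ofReal_mul (norm_nonneg A),
                ← ENNReal.ofReal_mul (mul_nonneg (norm_nonneg A) hM0)]
              exact pow_le_pow_left' (ENNReal.ofReal_le_ofReal (norm_g_le s hs A T M hM ψ γ)) 2
    _ = 2 * N * (ENNReal.ofReal ‖A‖ ^ 2 * ENNReal.ofReal M ^ 2)
          * ∑' γ : Fin d → ℤ, ENNReal.ofReal ‖chi s hs ψ γ‖ ^ 2 := by
        rw [ENNReal.tsum_mul_left]; ring
    _ ≤ 2 * N * (ENNReal.ofReal ‖A‖ ^ 2 * ENNReal.ofReal M ^ 2)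
          * (N * ENNReal.ofReal ‖ψ‖ ^ 2) :=
        mul_le_mul_right (tsum_chi_norm_sq s hs N hN ψ) _
    _ = 2 * N ^ 2 * ENNReal.ofReal (‖A‖ * M) ^ 2 * ENNReal.ofReal ‖ψ‖ ^ 2 := by
        rw [ENNReal.ofReal_mul (norm_nonneg A), mul_pow]
        ring


lemma nnnorm_rep_le (ψ : L2r d) (x : Ed d) :
    (‖rep s hs A T ψ x‖₊ : ℝ≥0∞) ≤ h s hs A T ψ x := by
  rw [rep, ← enorm_eq_nnnorm, Real.enorm_eq_ofReal ENNReal.toReal_nonneg]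
  exact ENNReal.ofReal_toReal_le

lemma eLpNorm_rep_le (N : NNReal)
    (hN : ∀ x : Ed d, ∑' γ : Fin d → ℤ, (s γ).indicator (fun _ => (1 : ℝ≥0∞)) x ≤ N)
    (M : ℝ) (hM : ∀ γ, ‖T γ‖ ≤ M) (ψ : L2r d) :
    eLpNorm (rep s hs A T ψ) 2 volume ≤ ENNReal.ofReal (2 * N * (‖A‖ * M * ‖ψ‖)) := by
  have hM0 : 0 ≤ M := le_trans (norm_nonneg (T fun _ => 0)) (hM _)
  have hsq : (eLpNorm (rep s hs A T ψ) 2 volume) ^ 2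
      ≤ (ENNReal.ofReal (2 * N * (‖A‖ * M * ‖ψ‖))) ^ 2 := by
    rw [eLpNorm_two_sq]
    calc ∫⁻ x, (‖rep s hs A T ψ x‖₊ : ℝ≥0∞) ^ 2
        ≤ ∫⁻ x, (h s hs A T ψ x) ^ 2 :=
          lintegral_mono fun x => pow_le_pow_left' (nnnorm_rep_le s hs A T ψ x) 2
      _ ≤ 2 * N ^ 2 * ENNReal.ofReal (‖A‖ * M) ^ 2 * ENNReal.ofReal ‖ψ‖ ^ 2 :=
          lintegral_h_sq_le s hs A T N hN M hM ψ
      _ ≤ (ENNReal.ofReal (2 * N * (‖A‖ * M * ‖ψ‖))) ^ 2 := by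
          have h2 : ENNReal.ofReal 2 = 2 := by norm_num
          have hNN : ENNReal.ofReal (N : ℝ) = (N : ℝ≥0∞) := by
            simp [ENNReal.ofReal_coe_nnreal]
          have key : ENNReal.ofReal (2 * N * (‖A‖ * M * ‖ψ‖))
              = 2 * (N:ℝ≥0∞) * (ENNReal.ofReal (‖A‖ * M) * ENNReal.ofReal ‖ψ‖) := by
            rw [ENNReal.ofReal_mul (by positivity : (0:ℝ) ≤ 2 * N),
              ENNReal.ofReal_mul (by norm_num : (0:ℝ) ≤ 2),
              ENNReal.ofReal_mul (mul_nonneg (norm_nonneg A) hM0), h2, hNN]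
          rw [key, mul_pow, mul_pow, mul_pow]
          calc 2 * (N:ℝ≥0∞) ^ 2 * ENNReal.ofReal (‖A‖ * M) ^ 2 * ENNReal.ofReal ‖ψ‖ ^ 2
              = 2 * ((N:ℝ≥0∞) ^ 2 * (ENNReal.ofReal (‖A‖ * M) ^ 2 * ENNReal.ofReal ‖ψ‖ ^ 2)) := by
                ring
            _ ≤ 2 ^ 2 * ((N:ℝ≥0∞) ^ 2 * (ENNReal.ofReal (‖A‖ * M) ^ 2 * ENNReal.ofReal ‖ψ‖ ^ 2)) := by
                gcongr
                norm_num
            _ = 2 ^ 2 * (N:ℝ≥0∞) ^ 2 * (ENNReal.ofReal (‖A‖ * M) ^ 2 * ENNReal.ofReal ‖ψ‖ ^ 2) := by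
                ring
  have := hsq
  rw [← ENNReal.rpow_natCast (eLpNorm _ _ _) 2, ← ENNReal.rpow_natCast (ENNReal.ofReal _) 2] at this
  exact (ENNReal.rpow_le_rpow_iff (by norm_num)).1 this

lemma memℒp_rep (N : NNReal)
    (hN : ∀ x : Ed d, ∑' γ : Fin d → ℤ, (s γ).indicator (fun _ => (1 : ℝ≥0∞)) x ≤ N)
    (M : ℝ) (hM : ∀ γ, ‖T γ‖ ≤ M) (ψ : L2r d) :
    MemLp (rep s hs A T ψ) 2 (volume : Measure (Ed d)) := by
  refine ⟨(measurable_rep s hs A T ψ).aestronglyMeasurable, ?_⟩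
  exact lt_of_le_of_lt (eLpNorm_rep_le s hs A T N hN M hM ψ) ENNReal.ofReal_lt_top

lemma ae_h_lt_top (N : NNReal)
    (hN : ∀ x : Ed d, ∑' γ : Fin d → ℤ, (s γ).indicator (fun _ => (1 : ℝ≥0∞)) x ≤ N)
    (M : ℝ) (hM : ∀ γ, ‖T γ‖ ≤ M) (ψ : L2r d) :
    ∀ᵐ x : Ed d, h s hs A T ψ x < ⊤ := by
  have hfin : ∫⁻ x, (h s hs A T ψ x) ^ 2 ≠ ⊤ :=
    ne_top_of_le_ne_top
      (ENNReal.mul_ne_top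
        (ENNReal.mul_ne_top (ENNReal.mul_ne_top ENNReal.ofNat_ne_top
          (ENNReal.pow_ne_top ENNReal.coe_ne_top)) (ENNReal.pow_ne_top ENNReal.ofReal_ne_top))
        (ENNReal.pow_ne_top ENNReal.ofReal_ne_top))
      (lintegral_h_sq_le s hs A T N hN M hM ψ)
  filter_upwards [ae_lt_top ((measurable_h s hs A T ψ).pow measurable_const) hfin] with x hx
  by_contra hc
  push_neg at hc
  rw [top_le_iff] at hc
  rw [hc, pow_two, ENNReal.top_mul_top] at hx
  exact lt_irrefl _ hx

lemma rep_eq_tsum (hA : ∀ ψ : L2r d, 0 ≤ ψ → 0 ≤ A ψ) (ψ : L2r d) :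
    ∀ᵐ x : Ed d, rep s hs A T ψ x =
      ∑' γ : Fin d → ℤ, (s γ).indicator (fun _ => (1 : ℝ)) x *
        (g s hs A T ψ γ : Ed d → ℝ) x := by
  filter_upwards [ae_g_nonneg s hs A T hA ψ] with x hx
  rw [rep, h, ENNReal.tsum_toReal_eq]
  · congr 1
    funext γ
    by_cases hxs : x ∈ s γ
    · simp only [Set.indicator_of_mem hxs, one_mul, ENNReal.toReal_ofReal (hx γ)]
    · simp only [Set.indicator_of_notMem hxs, zero_mul, ENNReal.toReal_zero]
  · intro γ
    exact ENNReal.mul_ne_top (by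
      by_cases hxs : x ∈ s γ <;>
        simp [Set.indicator_of_mem, Set.indicator_of_notMem, hxs]) ENNReal.ofReal_ne_top

lemma h_le_add (hA : ∀ ψ : L2r d, 0 ≤ ψ → 0 ≤ A ψ) (ψ₁ ψ₂ : L2r d) :
    ∀ᵐ x : Ed d, h s hs A T ψ₁ x ≤ h s hs A T ψ₂ x + h s hs A T (ψ₁ - ψ₂) x := by
  filter_upwards [ae_abs_g_sub_le s hs A T hA ψ₁ ψ₂] with x hx
  rw [h, h, h, ← ENNReal.tsum_add]
  refine ENNReal.tsum_le_tsum fun γ => ?_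
  rw [← mul_add]
  refine mul_le_mul_right ?_ _
  have h1 : (g s hs A T ψ₁ γ : Ed d → ℝ) x
      ≤ (g s hs A T ψ₂ γ : Ed d → ℝ) x + (g s hs A T (ψ₁ - ψ₂) γ : Ed d → ℝ) x := by
    have := (abs_sub_le_iff.1 (hx γ)).1
    linarith
  calc ENNReal.ofReal ((g s hs A T ψ₁ γ : Ed d → ℝ) x)
      ≤ ENNReal.ofReal ((g s hs A T ψ₂ γ : Ed d → ℝ) x + (g s hs A T (ψ₁ - ψ₂) γ : Ed d → ℝ) x) :=
        ENNReal.ofReal_le_ofReal h1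
    _ ≤ _ := ENNReal.ofReal_add_le


lemma h_le_add' (hA : ∀ ψ : L2r d, 0 ≤ ψ → 0 ≤ A ψ) (ψ₁ ψ₂ : L2r d) :
    ∀ᵐ x : Ed d, h s hs A T ψ₂ x ≤ h s hs A T ψ₁ x + h s hs A T (ψ₁ - ψ₂) x := by
  filter_upwards [ae_abs_g_sub_le s hs A T hA ψ₁ ψ₂] with x hx
  rw [h, h, h, ← ENNReal.tsum_add]
  refine ENNReal.tsum_le_tsum fun γ => ?_
  rw [← mul_add]
  refine mul_le_mul_right ?_ _
  have h1 : (g s hs A T ψ₂ γ : Ed d → ℝ) x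
      ≤ (g s hs A T ψ₁ γ : Ed d → ℝ) x + (g s hs A T (ψ₁ - ψ₂) γ : Ed d → ℝ) x := by
    have := (abs_sub_le_iff.1 (hx γ)).2
    linarith
  exact le_trans (ENNReal.ofReal_le_ofReal h1) ENNReal.ofReal_add_le

end GluedAux

open GluedAux in
/-- Lemma 2 of the paper: for a positivity preserving bounded operator `A` and
uniformly bounded operators `T γ` together with indicators of sets with finite
overlap `N`, the positively homogeneous map `ψ ↦ ∑_γ χ_γ A|T_γ(χ_γ ψ)|` extends by
continuity to a bounded map on `L²` with `‖Γ̂_A(T)ψ‖ ≤ C N ‖A‖ M ‖ψ‖`, and it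
satisfies `|Γ̂_A(T)ψ₁ - Γ̂_A(T)ψ₂| ≤ Γ̂_A(T)(ψ₁-ψ₂)` pointwise. -/
theorem glued_abs_operator_bounded (d : ℕ) (s : (Fin d → ℤ) → Set (Ed d))
    (hs : ∀ γ, MeasurableSet (s γ))
    (N : NNReal)
    (hN : ∀ x : Ed d, ∑' γ : Fin d → ℤ, (s γ).indicator (fun _ => (1 : ℝ≥0∞)) x ≤ N)
    (A : L2r d →L[ℝ] L2r d) (hA : ∀ ψ : L2r d, 0 ≤ ψ → 0 ≤ A ψ)
    (T : (Fin d → ℤ) → (L2r d →L[ℝ] L2r d))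
    (M : ℝ) (hM : ∀ γ, ‖T γ‖ ≤ M) :
    ∃ C : ℝ, 0 < C ∧ ∃ G : L2r d → L2r d,
      (∀ ψ : L2r d, ∀ᵐ x : Ed d, (G ψ : Ed d → ℝ) x =
        ∑' γ : Fin d → ℤ, (s γ).indicator (fun _ => (1 : ℝ)) x *
          (A |T γ (MemLp.toLp ((s γ).indicator ψ)
            (MemLp.indicator (hs γ) (Lp.memLp ψ)))| : Ed d → ℝ) x) ∧
      (∀ ψ : L2r d, ‖G ψ‖ ≤ C * N * ‖A‖ * M * ‖ψ‖) ∧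
      (∀ ψ₁ ψ₂ : L2r d, ∀ᵐ x : Ed d,
        |(G ψ₁ : Ed d → ℝ) x - (G ψ₂ : Ed d → ℝ) x| ≤ (G (ψ₁ - ψ₂) : Ed d → ℝ) x) := by
  have hM0 : 0 ≤ M := le_trans (norm_nonneg (T fun _ => 0)) (hM _)
  refine ⟨2, by norm_num, fun ψ => (memℒp_rep s hs A T N hN M hM ψ).toLp _, ?_, ?_, ?_⟩
  · intro ψ
    filter_upwards [MemLp.coeFn_toLp (memℒp_rep s hs A T N hN M hM ψ),
      rep_eq_tsum s hs A T hA ψ] with x hx1 hx2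
    rw [hx1, hx2]
    rfl
  · intro ψ
    rw [Lp.norm_toLp]
    have := ENNReal.toReal_le_of_le_ofReal (by positivity)
      (eLpNorm_rep_le s hs A T N hN M hM ψ)
    calc (eLpNorm (rep s hs A T ψ) 2 volume).toReal ≤ 2 * N * (‖A‖ * M * ‖ψ‖) := this
      _ = 2 * N * ‖A‖ * M * ‖ψ‖ := by ring
  · intro ψ₁ ψ₂
    have key : ∀ a b c : ℝ≥0∞, b < ⊤ → c < ⊤ → a ≤ b + c →
        a.toReal - b.toReal ≤ c.toReal := by
      intro a b c hb hc hle
      have h1 := ENNReal.toReal_mono (ENNReal.add_ne_top.2 ⟨hb.ne, hc.ne⟩) hle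
      rw [ENNReal.toReal_add hb.ne hc.ne] at h1
      linarith
    filter_upwards [MemLp.coeFn_toLp (memℒp_rep s hs A T N hN M hM ψ₁),
      MemLp.coeFn_toLp (memℒp_rep s hs A T N hN M hM ψ₂),
      MemLp.coeFn_toLp (memℒp_rep s hs A T N hN M hM (ψ₁ - ψ₂)),
      h_le_add s hs A T hA ψ₁ ψ₂, h_le_add' s hs A T hA ψ₁ ψ₂,
      ae_h_lt_top s hs A T N hN M hM ψ₁, ae_h_lt_top s hs A T N hN M hM ψ₂,
      ae_h_lt_top s hs A T N hN M hM (ψ₁ - ψ₂)] with x e1 e2 e3 l1 l2 f1 f2 f3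
    rw [e1, e2, e3, rep, rep, rep]
    rw [abs_sub_le_iff]
    exact ⟨key _ _ _ f2 f3 l1, key _ _ _ f1 f3 l2⟩
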